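/- Let (x^k) be a proximal gradient sequence whose stepsizes are generated by the long-BB-safeguarded update γ_{k+1} = min{ γ_k √(1 + γ_k/γ_{k−1}), γ_k / √(2 [γ_k² L_k² − γ_k ℓ_k]_+), 1/ℓ_k }, and let k ≥ 1 be such that ⟨y^k, s^k⟩ > 0. Then at least one of the following holds: γ_{k+1} ≥ γ_k; or γ_k ≥ 3/(2 c_k); or γ_k ≥ γ_{k+1} = 1/ℓ_k. -/

import Mathlib

open scoped RealInnerProductSpace BigOperators
open Filter

noncomputable section

/-- Euclidean space `ℝ^n`. -/
abbrev En (n : ℕ) : Type := EuclideanSpace ℝ (Fin n)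

/-- Convexity for an extended-real-valued function. -/
def ERConvex {n : ℕ} (g : En n → EReal) : Prop :=
  ∀ x y : En n, ∀ a b : ℝ, 0 ≤ a → 0 ≤ b → a + b = 1 →
    g (a • x + b • y) ≤ (a : EReal) * g x + (b : EReal) * g y

/-- Properness for an extended-real-valued function: nowhere `⊥`, somewhere finite. -/
def ERProper {n : ℕ} (g : En n → EReal) : Prop :=
  (∀ x, g x ≠ ⊥) ∧ (∃ x, g x ≠ ⊤)

/-- `p = prox_{γ g}(u)`: `p` minimizes `w ↦ g w + 1/(2γ)‖w − u‖²`. -/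
def IsProx {n : ℕ} (g : En n → EReal) (γ : ℝ) (u p : En n) : Prop :=
  ∀ w : En n,
    g p + ((1 / (2 * γ) * ‖p - u‖ ^ 2 : ℝ) : EReal)
      ≤ g w + ((1 / (2 * γ) * ‖w - u‖ ^ 2 : ℝ) : EReal)

/-- The composite objective `φ = f + g`. -/
def phi {n : ℕ} (f : En n → ℝ) (g : En n → EReal) (z : En n) : EReal :=
  (f z : EReal) + g z

/-- `p` is a minimizer of `φ = f + g`. -/
def IsArgmin {n : ℕ} (f : En n → ℝ) (g : En n → EReal) (p : En n) : Prop :=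
  ∀ z : En n, phi f g p ≤ phi f g z

/-- `(x^k)` is a proximal gradient sequence with stepsizes `(γ_k)` and gradient `f'`. -/
def PGSeq {n : ℕ} (f' : En n → En n) (g : En n → EReal)
    (γ : ℕ → ℝ) (x : ℕ → En n) : Prop :=
  ∀ k : ℕ, IsProx g (γ (k + 1)) (x k - γ (k + 1) • f' (x k)) (x (k + 1))

/-- `s^k = x^k − x^{k−1}`. -/
def sk {n : ℕ} (x : ℕ → En n) (k : ℕ) : En n := x k - x (k - 1)

/-- `y^k = ∇f(x^k) − ∇f(x^{k−1})`. -/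
def yk {n : ℕ} (f' : En n → En n) (x : ℕ → En n) (k : ℕ) : En n :=
  f' (x k) - f' (x (k - 1))

/-- `ℓ_k = ⟨y^k, s^k⟩ / ‖s^k‖²`. -/
def ellk {n : ℕ} (f' : En n → En n) (x : ℕ → En n) (k : ℕ) : ℝ :=
  ⟪yk f' x k, sk x k⟫ / ‖sk x k‖ ^ 2

/-- `L_k = ‖y^k‖ / ‖s^k‖`. -/
def Lk {n : ℕ} (f' : En n → En n) (x : ℕ → En n) (k : ℕ) : ℝ :=
  ‖yk f' x k‖ / ‖sk x k‖

/-- `c_k = ‖y^k‖² / ⟨y^k, s^k⟩`. -/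
def ck {n : ℕ} (f' : En n → En n) (x : ℕ → En n) (k : ℕ) : ℝ :=
  ‖yk f' x k‖ ^ 2 / ⟪yk f' x k, sk x k⟫

/-- `P_k = φ(x^k) − min φ`, as a real number (`x*` a minimizer of `φ`). -/
def Pk {n : ℕ} (f : En n → ℝ) (g : En n → EReal) (xstar : En n)
    (x : ℕ → En n) (k : ℕ) : ℝ :=
  (phi f g (x k)).toReal - (phi f g xstar).toReal

/-- `P_k^min = min_{i ≤ k} P_i`. -/
def PkMin {n : ℕ} (f : En n → ℝ) (g : En n → EReal) (xstar : En n)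
    (x : ℕ → En n) (k : ℕ) : ℝ :=
  (Finset.range (k + 1)).inf' ⟨0, Finset.mem_range.mpr (Nat.succ_pos k)⟩ (Pk f g xstar x)

/-- `U_k^r(x*) = ½‖x^k − x*‖² + ½‖x^k − x^{k−1}‖² + γ_k (1 + r ρ_k) P_{k−1}`. -/
def Uk {n : ℕ} (f : En n → ℝ) (g : En n → EReal) (r : ℝ) (xstar : En n)
    (γ : ℕ → ℝ) (x : ℕ → En n) (k : ℕ) : ℝ :=
  1 / 2 * ‖x k - xstar‖ ^ 2 + 1 / 2 * ‖x k - x (k - 1)‖ ^ 2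
    + γ k * (1 + r * (γ k / γ (k - 1))) * Pk f g xstar x (k - 1)

/-- Property (p1): `1 + r ρ_k − r ρ_{k+1}² ≥ 0` for all `k ≥ 1`. -/
def P1 (γ : ℕ → ℝ) (r : ℝ) : Prop :=
  ∀ k : ℕ, 1 ≤ k →
    0 ≤ 1 + r * (γ k / γ (k - 1)) - r * (γ (k + 1) / γ k) ^ 2

/-- Property (p2): `1/2 − ρ_{k+1}² [γ_k² L_k² − (2−r) γ_k ℓ_k + 1 − r] ≥ 0` for all `k ≥ 1`. -/
def P2 {n : ℕ} (f' : En n → En n) (x : ℕ → En n) (γ : ℕ → ℝ) (r : ℝ) : Prop :=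
  ∀ k : ℕ, 1 ≤ k →
    0 ≤ 1 / 2 - (γ (k + 1) / γ k) ^ 2 *
      ((γ k) ^ 2 * (Lk f' x k) ^ 2 - (2 - r) * γ k * ellk f' x k + 1 - r)

/-- Property (p3): for every `k ≥ 1`, either `γ_{k+1} ≥ γ_k` or there is
`1 ≤ j ≤ k` with `min{γ_j, γ_{k+1}} ≥ λ_min ‖x^j − x^{j−1}‖^{1−ν}`. -/
def P3 {n : ℕ} (x : ℕ → En n) (γ : ℕ → ℝ) (ν lammin : ℝ) : Prop :=
  ∀ k : ℕ, 1 ≤ k →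
    γ k ≤ γ (k + 1) ∨
      ∃ j : ℕ, 1 ≤ j ∧ j ≤ k ∧
        lammin * ‖x j - x (j - 1)‖ ^ (1 - ν) ≤ min (γ j) (γ (k + 1))

/-- `L` is a `ν`-Hölder modulus for `f'` on `Ω`. -/
def HolderOn {n : ℕ} (f' : En n → En n) (ν L : ℝ) (Ω : Set (En n)) : Prop :=
  ∀ x ∈ Ω, ∀ y ∈ Ω, ‖f' x - f' y‖ ≤ L * ‖x - y‖ ^ ν

/-- `f'` is locally `ν`-Hölder continuous. -/
def LocallyHolder {n : ℕ} (f' : En n → En n) (ν : ℝ) : Prop :=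
  ∀ Ω : Set (En n), IsCompact Ω → Convex ℝ Ω → ∃ L > 0, HolderOn f' ν L Ω

/-- First term in the adaPG^{r,r/2} stepsize update. -/
def adaT1 (γ : ℕ → ℝ) (r : ℝ) (k : ℕ) : ℝ :=
  γ k * Real.sqrt (1 / r + γ k / γ (k - 1))

/-- The bracket `γ_k² L_k² − (2 − r) γ_k ℓ_k + 1 − r` in the adaPG^{r,r/2} update. -/
def adaBrk {n : ℕ} (f' : En n → En n) (x : ℕ → En n) (γ : ℕ → ℝ) (r : ℝ) (k : ℕ) : ℝ :=
  (γ k) ^ 2 * (Lk f' x k) ^ 2 - (2 - r) * γ k * ellk f' x k + 1 - r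

/-- The adaPG^{r,r/2} stepsize: the minimum of the two terms, the second
being `+∞` (inactive) when the bracket is nonpositive. -/
def adaSafe {n : ℕ} (f' : En n → En n) (x : ℕ → En n) (γ : ℕ → ℝ) (r : ℝ) (k : ℕ) : ℝ :=
  if 0 < adaBrk f' x γ r k then
    min (adaT1 γ r k) (γ k / Real.sqrt (2 * adaBrk f' x γ r k))
  else adaT1 γ r k

/-- The stepsizes are generated by the adaPG^{r,r/2} update (for `k ≥ 1`). -/
def AdaPGUpdate {n : ℕ} (f' : En n → En n) (x : ℕ → En n) (γ : ℕ → ℝ) (r : ℝ) : Prop :=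
  ∀ k : ℕ, 1 ≤ k → γ (k + 1) = adaSafe f' x γ r k

/-- `λ_k = γ_k / ‖x^k − x^{k−1}‖^{1−ν}`. -/
def lamk {n : ℕ} (x : ℕ → En n) (γ : ℕ → ℝ) (ν : ℝ) (k : ℕ) : ℝ :=
  γ k / ‖x k - x (k - 1)‖ ^ (1 - ν)

/-- for the long-BB-safeguarded update
`γ_{k+1} = min{γ^safe_{k+1}, 1/ℓ_k}` (with `r = 1`), at any `k ≥ 1` with
`⟨y^k, s^k⟩ > 0`: either `γ_{k+1} ≥ γ_k`, or `γ_k ≥ 3/(2c_k)`, or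
`γ_k ≥ γ_{k+1} = 1/ℓ_k`. -/
theorem statement_15 {n : ℕ} (f : En n → ℝ) (f' : En n → En n) (g : En n → EReal)
    (hfconv : ConvexOn ℝ Set.univ f)
    (hf' : ∀ z, HasGradientAt f (f' z) z)
    (hgproper : ERProper g) (hglsc : LowerSemicontinuous g) (hgconv : ERConvex g)
    (hargmin : ∃ p, IsArgmin f g p)
    (γ : ℕ → ℝ) (hγ : ∀ k, 0 < γ k)
    (x : ℕ → En n) (hx : PGSeq f' g γ x)
    (hxne : ∀ k : ℕ, 1 ≤ k → x k ≠ x (k - 1))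
    (hupd : ∀ k : ℕ, 1 ≤ k →
      γ (k + 1) = min (adaSafe f' x γ 1 k) (1 / ellk f' x k))
    (k : ℕ) (hk : 1 ≤ k) (hys : 0 < ⟪yk f' x k, sk x k⟫) :
    γ k ≤ γ (k + 1) ∨ 3 / (2 * ck f' x k) ≤ γ k ∨
      (γ (k + 1) ≤ γ k ∧ γ (k + 1) = 1 / ellk f' x k) := by
  have hs : sk x k ≠ 0 := by
    simp only [sk, sub_ne_zero]; exact hxne k hk
  have hsn : 0 < ‖sk x k‖ := norm_pos_iff.mpr hs
  have hy : yk f' x k ≠ 0 := by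
    intro h; rw [h] at hys; simp at hys
  have hyn : 0 < ‖yk f' x k‖ := norm_pos_iff.mpr hy
  have hl : 0 < ellk f' x k := div_pos hys (by positivity)
  have hc : 0 < ck f' x k := div_pos (by positivity) hys
  by_cases h1 : γ k ≤ γ (k + 1)
  · exact Or.inl h1
  push_neg at h1
  have hupd' := hupd k hk
  have ht1 : γ k ≤ adaT1 γ 1 k := by
    have hρ : 0 < γ k / γ (k - 1) := div_pos (hγ k) (hγ (k - 1))
    have h01 : (1:ℝ) ≤ 1/1 + γ k / γ (k-1) := by linarith
    have hsq : (1:ℝ) ≤ Real.sqrt (1/1 + γ k / γ (k-1)) := by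
      have := Real.sqrt_le_sqrt h01
      simpa using this
    calc γ k = γ k * 1 := (mul_one _).symm
      _ ≤ γ k * Real.sqrt (1/1 + γ k / γ (k-1)) :=
          mul_le_mul_of_nonneg_left hsq (hγ k).le
      _ = adaT1 γ 1 k := rfl
  by_cases h2 : 1 / ellk f' x k ≤ adaSafe f' x γ 1 k
  · right; right
    refine ⟨h1.le, ?_⟩
    rw [hupd', min_eq_right h2]
  push_neg at h2
  have hmin : γ (k+1) = adaSafe f' x γ 1 k := by rw [hupd', min_eq_left h2.le]
  have hsafe_lt : adaSafe f' x γ 1 k < γ k := hmin ▸ h1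
  by_cases hB : 0 < adaBrk f' x γ 1 k
  swap
  · exfalso
    rw [adaSafe, if_neg hB] at hsafe_lt
    exact absurd hsafe_lt (not_lt.mpr ht1)
  rw [adaSafe, if_pos hB] at hsafe_lt h2
  set q := γ k / Real.sqrt (2 * adaBrk f' x γ 1 k) with hq
  have hq_lt : q < γ k := by
    rcases min_lt_iff.mp hsafe_lt with h | h
    · exact absurd h (not_lt.mpr ht1)
    · exact h
  have hq_lt2 : q < 1 / ellk f' x k := by
    rwa [min_eq_right (le_of_lt (lt_of_lt_of_le hq_lt ht1))] at h2
  have hsqpos : 0 < Real.sqrt (2 * adaBrk f' x γ 1 k) := Real.sqrt_pos.mpr (by linarith)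
  have hsq2 : (Real.sqrt (2 * adaBrk f' x γ 1 k))^2 = 2 * adaBrk f' x γ 1 k :=
    Real.sq_sqrt (by linarith)
  have h3 : 1 < 2 * adaBrk f' x γ 1 k := by
    rw [hq, div_lt_iff₀ hsqpos] at hq_lt
    have h1s : 1 < Real.sqrt (2 * adaBrk f' x γ 1 k) := by
      have := hγ k
      nlinarith
    nlinarith
  have h4 : (γ k * ellk f' x k)^2 < 2 * adaBrk f' x γ 1 k := by
    rw [hq, div_lt_div_iff₀ hsqpos hl] at hq_lt2
    have hgl : 0 < γ k * ellk f' x k := mul_pos (hγ k) hl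
    nlinarith
  right; left
  have hckl : ck f' x k * ellk f' x k = (Lk f' x k)^2 := by
    have ha : (⟪yk f' x k, sk x k⟫ : ℝ) ≠ 0 := ne_of_gt hys
    rw [ck, ellk, Lk, div_pow, div_mul_div_comm, mul_comm (‖yk f' x k‖ ^ 2),
      mul_div_mul_left _ _ ha]
  have hBval : adaBrk f' x γ 1 k = (γ k)^2 * (Lk f' x k)^2 - γ k * ellk f' x k := by
    rw [adaBrk]; ring
  rw [div_le_iff₀ (by positivity)]
  rw [hBval] at h3 h4
  nlinarith [mul_pos (hγ k) hl, sq_nonneg (γ k * ellk f' x k - 1), hc, hl, hγ k,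
    mul_pos hc hl, sq_nonneg (γ k * ellk f' x k)]

end
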